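/- Let s ≥ 3 and s+2 ≤ t ≤ 2s-1 be integers. Then (t-1)η > 2δ and δ > 2/3. -/

import Mathlib

/-- The pair `(s,t)` is regular if `s ≥ 11` and `s+3 ≤ t ≤ 2s-4`, or if
`(s,t) ∈ {(10,14),(10,15)}`. -/
def IsRegularPair (s t : ℕ) : Prop :=
  (11 ≤ s ∧ s + 3 ≤ t ∧ t ≤ 2 * s - 4) ∨ (s = 10 ∧ t = 14) ∨ (s = 10 ∧ t = 15)

open Classical in
/-- The exponent `α = α_{s,t}`. -/
noncomputable def ERalpha (s t : ℕ) : ℝ :=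
  if IsRegularPair s t then
    (((s : ℝ) - 2) * ((t : ℝ) - (s : ℝ)) * ((t : ℝ) + (s : ℝ) - 1) + 2 * (t : ℝ) - 2 * (s : ℝ)) /
      ((2 * (s : ℝ) - 3) * ((t : ℝ) - (s : ℝ)) * ((t : ℝ) + (s : ℝ) - 1) - 2 * (s : ℝ) + 4)
  else
    (((s : ℝ) - 2) * ((t : ℝ) - (s : ℝ)) * ((s : ℝ) - 1) + (s : ℝ) - 1) /
      ((2 * (s : ℝ) - 3) * ((t : ℝ) - (s : ℝ)) * ((s : ℝ) - 1) + 2 * (s : ℝ) - (t : ℝ))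

/-- `δ = s - (2s-1)α`. -/
noncomputable def ERdelta (s t : ℕ) : ℝ := (s : ℝ) - (2 * (s : ℝ) - 1) * ERalpha s t

/-- `η = 2(1-α) - δ`. -/
noncomputable def EReta (s t : ℕ) : ℝ := 2 * (1 - ERalpha s t) - ERdelta s t

set_option maxHeartbeats 800000 in
/-- **Lemma (app2(d),(e)).** `(t-1)η > 2δ` and `δ > 2/3`. -/
theorem eta_delta_ineqs (s t : ℕ) (hs : 3 ≤ s) (ht1 : s + 2 ≤ t) (ht2 : t ≤ 2 * s - 1) :
    ((t : ℝ) - 1) * EReta s t > 2 * ERdelta s t ∧ ERdelta s t > 2 / 3 := by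
  set x : ℝ := (s : ℝ) with hx
  set y : ℝ := (t : ℝ) with hy
  by_cases h : IsRegularPair s t
  · -- regular case
    have hnat : 10 ≤ s ∧ s + 3 ≤ t ∧ t + 4 ≤ 2 * s := by
      rcases h with ⟨h1, h2, h3⟩ | ⟨h1, h2⟩ | ⟨h1, h2⟩ <;> omega
    have ha : (0 : ℝ) ≤ y - x - 3 := by
      rw [hx, hy]; have := hnat.2.1
      have : (s : ℝ) + 3 ≤ (t : ℝ) := by exact_mod_cast this
      linarith
    have hb : (0 : ℝ) ≤ 2 * x - 4 - y := by
      rw [hx, hy]; have := hnat.2.2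
      have : (t : ℝ) + 4 ≤ 2 * (s : ℝ) := by exact_mod_cast this
      linarith
    have hα : ERalpha s t =
        ((x - 2) * (y - x) * (y + x - 1) + 2 * y - 2 * x) /
          ((2 * x - 3) * (y - x) * (y + x - 1) - 2 * x + 4) := by
      simp only [ERalpha, if_pos h]; rfl
    set N : ℝ := (x - 2) * (y - x) * (y + x - 1) + 2 * y - 2 * x with hN
    set D : ℝ := (2 * x - 3) * (y - x) * (y + x - 1) - 2 * x + 4 with hD
    have hDpos : 0 < D := by
      rw [hD]
      nlinarith [mul_nonneg ha ha, mul_nonneg ha hb, mul_nonneg hb hb,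
        mul_nonneg (mul_nonneg ha ha) ha, mul_nonneg (mul_nonneg ha ha) hb,
        mul_nonneg (mul_nonneg ha hb) hb, mul_nonneg (mul_nonneg hb hb) hb]
    have hδ : ERdelta s t =
        (2 * (x - 1) * (y - x) * (y + x - 1) - 2 * x * (x - 2) - 2 * (2 * x - 1) * (y - x)) / D := by
      rw [ERdelta, hα, eq_div_iff (ne_of_gt hDpos)]
      field_simp
      ring
    have hη : EReta s t =
        (2 * (x - 2) ^ 2 + 2 * (2 * x - 3) * (y - x)) / D := by
      rw [EReta, ERdelta, hα, eq_div_iff (ne_of_gt hDpos)]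
      field_simp
      ring
    constructor
    · rw [hδ, hη, gt_iff_lt, ← sub_pos]
      have heq : (y - 1) * ((2 * (x - 2) ^ 2 + 2 * (2 * x - 3) * (y - x)) / D) -
          2 * ((2 * (x - 1) * (y - x) * (y + x - 1) - 2 * x * (x - 2) -
            2 * (2 * x - 1) * (y - x)) / D) =
          ((y - 1) * (2 * (x - 2) ^ 2 + 2 * (2 * x - 3) * (y - x)) -
            2 * (2 * (x - 1) * (y - x) * (y + x - 1) - 2 * x * (x - 2) -
              2 * (2 * x - 1) * (y - x))) / D := by
        ring
      rw [heq]
      apply div_pos _ hDpos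
      nlinarith [mul_nonneg ha ha, mul_nonneg ha hb, mul_nonneg hb hb,
        mul_nonneg (mul_nonneg ha ha) ha, mul_nonneg (mul_nonneg ha ha) hb,
        mul_nonneg (mul_nonneg ha hb) hb, mul_nonneg (mul_nonneg hb hb) hb]
    · rw [hδ, gt_iff_lt, div_lt_div_iff₀ (by norm_num : (0:ℝ) < 3) hDpos]
      rw [hD]
      nlinarith [mul_nonneg ha ha, mul_nonneg ha hb, mul_nonneg hb hb,
        mul_nonneg (mul_nonneg ha ha) ha, mul_nonneg (mul_nonneg ha ha) hb,
        mul_nonneg (mul_nonneg ha hb) hb, mul_nonneg (mul_nonneg hb hb) hb]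
  · -- exceptional case
    have ha : (0 : ℝ) ≤ y - x - 2 := by
      rw [hx, hy]
      have : (s : ℝ) + 2 ≤ (t : ℝ) := by exact_mod_cast ht1
      linarith
    have hb : (0 : ℝ) ≤ 2 * x - 1 - y := by
      rw [hx, hy]
      have h1 : t + 1 ≤ 2 * s := by omega
      have : (t : ℝ) + 1 ≤ 2 * (s : ℝ) := by exact_mod_cast h1
      linarith
    have hα : ERalpha s t =
        ((x - 2) * (y - x) * (x - 1) + x - 1) /
          ((2 * x - 3) * (y - x) * (x - 1) + 2 * x - y) := by
      simp only [ERalpha, if_neg h]; rfl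
    set D : ℝ := (2 * x - 3) * (y - x) * (x - 1) + 2 * x - y with hD
    have hDpos : 0 < D := by
      rw [hD]
      nlinarith [mul_nonneg ha ha, mul_nonneg ha hb, mul_nonneg hb hb,
        mul_nonneg (mul_nonneg ha ha) ha, mul_nonneg (mul_nonneg ha ha) hb,
        mul_nonneg (mul_nonneg ha hb) hb, mul_nonneg (mul_nonneg hb hb) hb]
    have hδ : ERdelta s t =
        (2 * (x - 1) ^ 2 * (y - x) - x * y + 3 * x - 1) / D := by
      rw [ERdelta, hα, eq_div_iff (ne_of_gt hDpos)]
      field_simp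
      ring
    have hη : EReta s t = (y * (x - 2) - (x - 3)) / D := by
      rw [EReta, ERdelta, hα, eq_div_iff (ne_of_gt hDpos)]
      field_simp
      ring
    constructor
    · rw [hδ, hη, gt_iff_lt, ← sub_pos]
      have heq : (y - 1) * ((y * (x - 2) - (x - 3)) / D) -
          2 * ((2 * (x - 1) ^ 2 * (y - x) - x * y + 3 * x - 1) / D) =
          ((y - 1) * (y * (x - 2) - (x - 3)) -
            2 * (2 * (x - 1) ^ 2 * (y - x) - x * y + 3 * x - 1)) / D := by
        ring
      rw [heq]
      apply div_pos _ hDpos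
      nlinarith [mul_nonneg ha ha, mul_nonneg ha hb, mul_nonneg hb hb,
        mul_nonneg (mul_nonneg ha ha) ha, mul_nonneg (mul_nonneg ha ha) hb,
        mul_nonneg (mul_nonneg ha hb) hb, mul_nonneg (mul_nonneg hb hb) hb]
    · rw [hδ, gt_iff_lt, div_lt_div_iff₀ (by norm_num : (0:ℝ) < 3) hDpos]
      rw [hD]
      nlinarith [mul_nonneg ha ha, mul_nonneg ha hb, mul_nonneg hb hb,
        mul_nonneg (mul_nonneg ha ha) ha, mul_nonneg (mul_nonneg ha ha) hb,
        mul_nonneg (mul_nonneg ha hb) hb, mul_nonneg (mul_nonneg hb hb) hb]
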